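/- (Discrete Ham-Sandwich theorem in the plane) For any two finite point sets P₁, P₂ in ℝ², there exists a line ℓ such that each open half-plane determined by ℓ contains at most ⌊|P₁|/2⌋ points of P₁ and at most ⌊|P₂|/2⌋ points of P₂. -/

import Mathlib

namespace DHS

/-- Projection of a point onto direction `θ`. -/
noncomputable def pf (p : ℝ × ℝ) (θ : ℝ) : ℝ := p.1 * Real.cos θ + p.2 * Real.sin θ

lemma pf_add_pi (p : ℝ × ℝ) (θ : ℝ) : pf p (θ + Real.pi) = - pf p θ := by
  simp [pf, Real.cos_add_pi, Real.sin_add_pi]; ring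

lemma sup'_neg {ι : Type*} (s : Finset ι) (hs : s.Nonempty) (f : ι → ℝ) :
    s.sup' hs (fun i => -f i) = - s.inf' hs f := by
  apply le_antisymm
  · apply Finset.sup'_le
    intro i hi
    simp only [neg_le_neg_iff]
    exact Finset.inf'_le _ hi
  · obtain ⟨i, hi, h⟩ := Finset.exists_mem_eq_inf' hs f
    rw [h]
    exact Finset.le_sup' (fun i => -f i) hi

lemma inf'_neg {ι : Type*} (s : Finset ι) (hs : s.Nonempty) (f : ι → ℝ) :
    s.inf' hs (fun i => -f i) = - s.sup' hs f := by
  have h := sup'_neg s hs (fun i => -f i)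
  simp only [neg_neg] at h
  rw [h, neg_neg]

/-- For each finite point set `P`, a continuous "median level" function `m : ℝ → ℝ`
such that the line `pf · θ = m θ` bisects `P`, and `m (θ + π) = - m θ`. -/
lemma median_exists (P : Finset (ℝ × ℝ)) :
    ∃ m : ℝ → ℝ, Continuous m ∧ (∀ θ, m (θ + Real.pi) = - m θ) ∧
      (∀ θ, (P.filter (fun q => m θ < pf q θ)).card ≤ P.card / 2) ∧
      (∀ θ, (P.filter (fun q => pf q θ < m θ)).card ≤ P.card / 2) := by
  rcases P.eq_empty_or_nonempty with rfl | hP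
  · exact ⟨fun _ => 0, continuous_const, by simp, by simp, by simp⟩
  set n := P.card with hn
  have hn1 : 1 ≤ n := Finset.card_pos.mpr hP
  set k : ℕ := (n + 1) / 2 with hk
  have hk1 : 1 ≤ k := by omega
  have hkn : k ≤ n := by omega
  have hpow : (P.powersetCard k).Nonempty := by
    rw [Finset.powersetCard_nonempty]; exact hkn
  have hpowa : (P.powersetCard k).attach.Nonempty := Finset.attach_nonempty_iff.mpr hpow
  have hSne : ∀ S : {x // x ∈ P.powersetCard k}, (S : Finset (ℝ × ℝ)).Nonempty := by
    intro S
    have := Finset.mem_powersetCard.mp S.2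
    exact Finset.card_pos.mp (by omega)
  set σ : ℝ → ℝ := fun θ =>
    (P.powersetCard k).attach.inf' hpowa (fun S => (S : Finset (ℝ × ℝ)).sup' (hSne S) (fun p => pf p θ)) with hσ
  set τ : ℝ → ℝ := fun θ =>
    (P.powersetCard k).attach.sup' hpowa (fun S => (S : Finset (ℝ × ℝ)).inf' (hSne S) (fun p => pf p θ)) with hτ
  -- basic counting facts
  have cont_pf : ∀ p : ℝ × ℝ, Continuous (pf p) := by
    intro p
    exact ((continuous_const.mul Real.continuous_cos).add (continuous_const.mul Real.continuous_sin))
  have hσcont : Continuous σ := by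
    apply Continuous.finset_inf'_apply
    intro S _
    apply Continuous.finset_sup'_apply
    intro p _
    exact cont_pf p
  have hτcont : Continuous τ := by
    apply Continuous.finset_sup'_apply
    intro S _
    apply Continuous.finset_inf'_apply
    intro p _
    exact cont_pf p
  -- counting facts at a fixed θ
  have hA : ∀ θ, (P.filter (fun q => σ θ < pf q θ)).card ≤ n - k := by
    intro θ
    obtain ⟨S₀, _, hS₀⟩ := Finset.exists_mem_eq_inf' hpowa
      (fun S : {x // x ∈ P.powersetCard k} => (S : Finset (ℝ × ℝ)).sup' (hSne S) (fun p => pf p θ))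
    have hS₀P := Finset.mem_powersetCard.mp S₀.2
    have hsub : P.filter (fun q => σ θ < pf q θ) ⊆ P \ (S₀ : Finset (ℝ × ℝ)) := by
      intro q hq
      rw [Finset.mem_filter] at hq
      rw [Finset.mem_sdiff]
      refine ⟨hq.1, fun hqS => ?_⟩
      have h1 : σ θ = (S₀ : Finset (ℝ × ℝ)).sup' (hSne S₀) (fun p => pf p θ) := hS₀
      have : pf q θ ≤ σ θ := by
        rw [h1]; exact Finset.le_sup' (fun p => pf p θ) hqS
      linarith [hq.2]
    calc (P.filter (fun q => σ θ < pf q θ)).card ≤ (P \ (S₀ : Finset (ℝ × ℝ))).card :=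
          Finset.card_le_card hsub
      _ = n - k := by rw [Finset.card_sdiff_of_subset hS₀P.1, hS₀P.2]
  have hB : ∀ θ, (P.filter (fun q => pf q θ < σ θ)).card ≤ k - 1 := by
    intro θ
    by_contra hcon
    push_neg at hcon
    have hcard : k ≤ (P.filter (fun q => pf q θ < σ θ)).card := by omega
    obtain ⟨S, hSsub, hScard⟩ := Finset.exists_subset_card_eq hcard
    have hSP : S ∈ P.powersetCard k :=
      Finset.mem_powersetCard.mpr ⟨hSsub.trans (Finset.filter_subset _ _), hScard⟩
    have hle : σ θ ≤ S.sup' (hSne ⟨S, hSP⟩) (fun p => pf p θ) :=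
      Finset.inf'_le (fun T : {x // x ∈ P.powersetCard k} =>
        (T : Finset (ℝ × ℝ)).sup' (hSne T) (fun p => pf p θ)) (Finset.mem_attach _ ⟨S, hSP⟩)
    obtain ⟨p, hp, hpe⟩ := Finset.exists_mem_eq_sup' (hSne ⟨S, hSP⟩) (fun p => pf p θ)
    have : pf p θ < σ θ := (Finset.mem_filter.mp (hSsub hp)).2
    rw [hpe] at hle
    linarith
  have hA' : ∀ θ, (P.filter (fun q => pf q θ < τ θ)).card ≤ n - k := by
    intro θ
    obtain ⟨S₀, _, hS₀⟩ := Finset.exists_mem_eq_sup' hpowa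
      (fun S : {x // x ∈ P.powersetCard k} => (S : Finset (ℝ × ℝ)).inf' (hSne S) (fun p => pf p θ))
    have hS₀P := Finset.mem_powersetCard.mp S₀.2
    have hsub : P.filter (fun q => pf q θ < τ θ) ⊆ P \ (S₀ : Finset (ℝ × ℝ)) := by
      intro q hq
      rw [Finset.mem_filter] at hq
      rw [Finset.mem_sdiff]
      refine ⟨hq.1, fun hqS => ?_⟩
      have h1 : τ θ = (S₀ : Finset (ℝ × ℝ)).inf' (hSne S₀) (fun p => pf p θ) := hS₀
      have : τ θ ≤ pf q θ := by
        rw [h1]; exact Finset.inf'_le (fun p => pf p θ) hqS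
      linarith [hq.2]
    calc (P.filter (fun q => pf q θ < τ θ)).card ≤ (P \ (S₀ : Finset (ℝ × ℝ))).card :=
          Finset.card_le_card hsub
      _ = n - k := by rw [Finset.card_sdiff_of_subset hS₀P.1, hS₀P.2]
  have hB' : ∀ θ, (P.filter (fun q => τ θ < pf q θ)).card ≤ k - 1 := by
    intro θ
    by_contra hcon
    push_neg at hcon
    have hcard : k ≤ (P.filter (fun q => τ θ < pf q θ)).card := by omega
    obtain ⟨S, hSsub, hScard⟩ := Finset.exists_subset_card_eq hcard
    have hSP : S ∈ P.powersetCard k :=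
      Finset.mem_powersetCard.mpr ⟨hSsub.trans (Finset.filter_subset _ _), hScard⟩
    have hle : S.inf' (hSne ⟨S, hSP⟩) (fun p => pf p θ) ≤ τ θ :=
      Finset.le_sup' (fun T : {x // x ∈ P.powersetCard k} =>
        (T : Finset (ℝ × ℝ)).inf' (hSne T) (fun p => pf p θ)) (Finset.mem_attach _ ⟨S, hSP⟩)
    obtain ⟨p, hp, hpe⟩ := Finset.exists_mem_eq_inf' (hSne ⟨S, hSP⟩) (fun p => pf p θ)
    have : τ θ < pf p θ := (Finset.mem_filter.mp (hSsub hp)).2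
    rw [hpe] at hle
    linarith
  -- σ ≤ τ
  have hστ : ∀ θ, σ θ ≤ τ θ := by
    intro θ
    by_contra hcon
    push_neg at hcon
    have hcover : P ⊆ (P.filter (fun q => pf q θ < σ θ)) ∪ (P.filter (fun q => τ θ < pf q θ)) := by
      intro q hq
      rw [Finset.mem_union, Finset.mem_filter, Finset.mem_filter]
      rcases lt_or_ge (pf q θ) (σ θ) with h | h
      · exact Or.inl ⟨hq, h⟩
      · exact Or.inr ⟨hq, lt_of_lt_of_le hcon h⟩
    have := Finset.card_le_card hcover
    have := Finset.card_union_le (P.filter (fun q => pf q θ < σ θ)) (P.filter (fun q => τ θ < pf q θ))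
    have h1 := hB θ
    have h2 := hB' θ
    omega
  -- antisymmetry
  have hσflip : ∀ θ, σ (θ + Real.pi) = - τ θ := by
    intro θ
    rw [hσ, hτ]
    simp only [pf_add_pi]
    rw [← inf'_neg]
    congr 1
    funext S
    rw [← sup'_neg]
  have hτflip : ∀ θ, τ (θ + Real.pi) = - σ θ := by
    intro θ
    rw [hσ, hτ]
    simp only [pf_add_pi]
    rw [← sup'_neg]
    congr 1
    funext S
    rw [← inf'_neg]
  refine ⟨fun θ => (σ θ + τ θ) / 2, (hσcont.add hτcont).div_const 2, ?_, ?_, ?_⟩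
  · intro θ
    show (σ (θ + Real.pi) + τ (θ + Real.pi)) / 2 = -((σ θ + τ θ) / 2)
    rw [hσflip, hτflip]; ring
  · intro θ
    beta_reduce
    have hsub : P.filter (fun q => (σ θ + τ θ) / 2 < pf q θ) ⊆ P.filter (fun q => σ θ < pf q θ) := by
      intro q hq
      rw [Finset.mem_filter] at hq ⊢
      exact ⟨hq.1, by have := hστ θ; linarith [hq.2]⟩
    have := Finset.card_le_card hsub
    have := hA θ
    omega
  · intro θ
    beta_reduce
    have hsub : P.filter (fun q => pf q θ < (σ θ + τ θ) / 2) ⊆ P.filter (fun q => pf q θ < τ θ) := by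
      intro q hq
      rw [Finset.mem_filter] at hq ⊢
      exact ⟨hq.1, by have := hστ θ; linarith [hq.2]⟩
    have := Finset.card_le_card hsub
    have := hA' θ
    omega

end DHS

/-- Discrete Ham-Sandwich theorem in the plane: for any two finite point sets `P₁, P₂`
there is a line such that each open half-plane contains at most `⌊|Pᵢ|/2⌋` points of `Pᵢ`. -/
theorem discrete_ham_sandwich (P₁ P₂ : Finset (ℝ × ℝ)) :
    ∃ a b c : ℝ, (a, b) ≠ (0, 0) ∧
      {q ∈ (P₁ : Set (ℝ × ℝ)) | 0 < a * q.1 + b * q.2 + c}.ncard ≤ P₁.card / 2 ∧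
      {q ∈ (P₁ : Set (ℝ × ℝ)) | a * q.1 + b * q.2 + c < 0}.ncard ≤ P₁.card / 2 ∧
      {q ∈ (P₂ : Set (ℝ × ℝ)) | 0 < a * q.1 + b * q.2 + c}.ncard ≤ P₂.card / 2 ∧
      {q ∈ (P₂ : Set (ℝ × ℝ)) | a * q.1 + b * q.2 + c < 0}.ncard ≤ P₂.card / 2 := by
  obtain ⟨m₁, hm₁c, hm₁f, hm₁A, hm₁B⟩ := DHS.median_exists P₁
  obtain ⟨m₂, hm₂c, hm₂f, hm₂A, hm₂B⟩ := DHS.median_exists P₂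
  set G : ℝ → ℝ := fun θ => m₁ θ - m₂ θ with hG
  have hGc : Continuous G := hm₁c.sub hm₂c
  have hGflip : G Real.pi = - G 0 := by
    have h1 := hm₁f 0
    have h2 := hm₂f 0
    simp only [zero_add] at h1 h2
    simp only [hG, h1, h2]; ring
  have hpi : (0 : ℝ) ≤ Real.pi := Real.pi_pos.le
  -- find a root of G in [0, π]
  have : ∃ θ ∈ Set.Icc (0:ℝ) Real.pi, G θ = 0 := by
    rcases le_or_gt (G 0) 0 with h | h
    · have : (0:ℝ) ∈ Set.Icc (G 0) (G Real.pi) := ⟨h, by rw [hGflip]; linarith⟩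
      obtain ⟨θ, hθ, hθ0⟩ := intermediate_value_Icc hpi hGc.continuousOn this
      exact ⟨θ, hθ, hθ0⟩
    · have : (0:ℝ) ∈ Set.Icc (G Real.pi) (G 0) := ⟨by rw [hGflip]; linarith, h.le⟩
      obtain ⟨θ, hθ, hθ0⟩ := intermediate_value_Icc' hpi hGc.continuousOn this
      exact ⟨θ, hθ, hθ0⟩
  obtain ⟨θ, -, hθ0⟩ := this
  have hmeq : m₁ θ = m₂ θ := by simpa [hG, sub_eq_zero] using hθ0
  refine ⟨Real.cos θ, Real.sin θ, - m₁ θ, ?_, ?_, ?_, ?_, ?_⟩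
  · intro h
    rw [Prod.mk.injEq] at h
    have := Real.sin_sq_add_cos_sq θ
    rw [h.1, h.2] at this
    norm_num at this
  · have hset : {q ∈ (P₁ : Set (ℝ × ℝ)) | 0 < Real.cos θ * q.1 + Real.sin θ * q.2 + - m₁ θ}
        = ↑(P₁.filter (fun q => m₁ θ < DHS.pf q θ)) := by
      ext q
      rw [Finset.coe_filter]
      simp only [Set.mem_setOf_eq, Finset.coe_filter, Finset.mem_coe, DHS.pf]
      constructor
      · rintro ⟨h1, h2⟩; exact ⟨h1, by linarith [h2]⟩
      · rintro ⟨h1, h2⟩; exact ⟨h1, by linarith [h2]⟩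
    rw [hset, Set.ncard_coe_finset]
    exact hm₁A θ
  · have hset : {q ∈ (P₁ : Set (ℝ × ℝ)) | Real.cos θ * q.1 + Real.sin θ * q.2 + - m₁ θ < 0}
        = ↑(P₁.filter (fun q => DHS.pf q θ < m₁ θ)) := by
      ext q
      rw [Finset.coe_filter]
      simp only [Set.mem_setOf_eq, Finset.coe_filter, Finset.mem_coe, DHS.pf]
      constructor
      · rintro ⟨h1, h2⟩; exact ⟨h1, by linarith [h2]⟩
      · rintro ⟨h1, h2⟩; exact ⟨h1, by linarith [h2]⟩
    rw [hset, Set.ncard_coe_finset]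
    exact hm₁B θ
  · have hset : {q ∈ (P₂ : Set (ℝ × ℝ)) | 0 < Real.cos θ * q.1 + Real.sin θ * q.2 + - m₁ θ}
        = ↑(P₂.filter (fun q => m₂ θ < DHS.pf q θ)) := by
      ext q
      rw [Finset.coe_filter]
      simp only [Set.mem_setOf_eq, Finset.coe_filter, Finset.mem_coe, DHS.pf]
      constructor
      · rintro ⟨h1, h2⟩; exact ⟨h1, by rw [← hmeq]; linarith [h2]⟩
      · rintro ⟨h1, h2⟩; rw [← hmeq] at h2; exact ⟨h1, by linarith [h2]⟩
    rw [hset, Set.ncard_coe_finset]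
    exact hm₂A θ
  · have hset : {q ∈ (P₂ : Set (ℝ × ℝ)) | Real.cos θ * q.1 + Real.sin θ * q.2 + - m₁ θ < 0}
        = ↑(P₂.filter (fun q => DHS.pf q θ < m₂ θ)) := by
      ext q
      rw [Finset.coe_filter]
      simp only [Set.mem_setOf_eq, Finset.coe_filter, Finset.mem_coe, DHS.pf]
      constructor
      · rintro ⟨h1, h2⟩; exact ⟨h1, by rw [← hmeq]; linarith [h2]⟩
      · rintro ⟨h1, h2⟩; rw [← hmeq] at h2; exact ⟨h1, by linarith [h2]⟩
    rw [hset, Set.ncard_coe_finset]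
    exact hm₂B θ
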